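/- arXiv:1105.3399 — 8 statements merged into one kernel-verified Lean document; each statement's English description precedes it below -/
import Mathlib

section
/- For every natural number n, the integral over [-π, π] of cos(2nx)/(2 + sin²x) with respect to x equals π·(−c(n) + d(n)·√(2/3)), where c and d are the integer sequences defined by c(0) = 0, c(1) = 4, c(n) = 10·c(n−1) − c(n−2), and d(0) = 1, d(1) = 5, d(n) = 10·d(n−1) − d(n−2). -/
open Real intervalIntegral

noncomputable def kk : ℝ := Real.sqrt (3/2)

lemma kk_sq : kk ^ 2 = 3/2 := Real.sq_sqrt (by norm_num)
lemma kk_gt : 1 < kk := by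
  have h : (1:ℝ) = Real.sqrt 1 := (Real.sqrt_one).symm
  rw [kk, h]
  exact Real.sqrt_lt_sqrt (by norm_num) (by norm_num)

lemma sqrt6 : Real.sqrt 6 = 2 * kk := by
  rw [kk, show (6:ℝ) = 4 * (3/2) by norm_num, Real.sqrt_mul (by norm_num),
    show (4:ℝ) = 2^2 by norm_num, Real.sqrt_sq (by norm_num)]

noncomputable def G (x : ℝ) : ℝ :=
  (x + Real.arctan ((kk - 1) * Real.sin x * Real.cos x / (1 + (kk - 1) * Real.sin x ^ 2))) / Real.sqrt 6

lemma hG (x : ℝ) : HasDerivAt G (1 / (2 + Real.sin x ^ 2)) x := by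
  have hs := Real.hasDerivAt_sin x
  have hc := Real.hasDerivAt_cos x
  have ha : (0:ℝ) < kk - 1 := by linarith [kk_gt]
  have hden : (0:ℝ) < 1 + (kk - 1) * Real.sin x ^ 2 := by positivity
  have hnum : HasDerivAt (fun x => (kk - 1) * Real.sin x * Real.cos x)
      ((kk - 1) * Real.cos x * Real.cos x + (kk - 1) * Real.sin x * (-Real.sin x)) x :=
    (hs.const_mul (kk - 1)).mul hc
  have hden' : HasDerivAt (fun x => 1 + (kk - 1) * Real.sin x ^ 2)
      ((kk - 1) * (2 * Real.sin x * Real.cos x)) x := by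
    have h2 : HasDerivAt (fun x => Real.sin x ^ 2) (2 * Real.sin x * Real.cos x) x := by
      have := hs.mul hs
      simp only [sq]
      exact this.congr_deriv (by ring)
    simpa using (h2.const_mul (kk - 1)).const_add 1
  have hu := hnum.div hden' (ne_of_gt hden)
  have harc := (Real.hasDerivAt_arctan ((kk - 1) * Real.sin x * Real.cos x / (1 + (kk - 1) * Real.sin x ^ 2))).comp x hu
  have hfinal := ((hasDerivAt_id x).add harc).div_const (Real.sqrt 6)
  refine hfinal.congr_deriv ?_
  symm
  have hpy : Real.cos x ^ 2 = 1 - Real.sin x ^ 2 := by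
    have := Real.sin_sq_add_cos_sq x; linarith
  have hk2 := kk_sq
  rw [sqrt6]
  set s := Real.sin x
  set cx := Real.cos x
  have h2s : (0:ℝ) < 2 + s ^ 2 := by positivity
  have hq : (0:ℝ) < 1 + ((kk - 1) * s * cx / (1 + (kk - 1) * s ^ 2)) ^ 2 := by positivity
  have hkpos : (0:ℝ) < kk := by linarith [kk_gt]
  have hP : (1 + (kk - 1) * s ^ 2) ≠ 0 := ne_of_gt hden
  have hQ : (2 + s^2) ≠ 0 := ne_of_gt h2s
  have hU : (1 + ((kk - 1) * s * cx / (1 + (kk - 1) * s ^ 2)) ^ 2) ≠ 0 := ne_of_gt hq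
  have hK : kk ≠ 0 := ne_of_gt hkpos
  field_simp
  linear_combination (2*kk*s^2*(kk-1)^2 - (2+s^2)*(kk-1)) * hpy + (2*kk*s^2) * hk2

lemma cont_inv : Continuous (fun x : ℝ => 1 / (2 + Real.sin x ^ 2)) := by
  apply Continuous.div continuous_const (by continuity)
  intro x
  positivity

lemma cont_f (r : ℝ) : Continuous (fun x : ℝ => Real.cos (r * x) / (2 + Real.sin x ^ 2)) := by
  apply Continuous.div (by continuity) (by continuity)
  intro x
  positivity

lemma I0 : ∫ x in (-π)..π, 1 / (2 + Real.sin x ^ 2) = π * Real.sqrt (2/3) := by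
  have h := intervalIntegral.integral_eq_sub_of_hasDerivAt (f := G)
    (fun x _ => hG x) (cont_inv.intervalIntegrable (-π) π)
  have h6 : Real.sqrt 6 ≠ 0 := ne_of_gt (Real.sqrt_pos.mpr (by norm_num))
  have hm : Real.sqrt (2/3) * Real.sqrt 6 = 2 := by
    rw [← Real.sqrt_mul (by norm_num), show (2/3:ℝ)*6 = 2^2 by norm_num,
      Real.sqrt_sq (by norm_num)]
  have hGpi : G π = π / Real.sqrt 6 := by
    unfold G; rw [Real.sin_pi]; simp
  have hGmpi : G (-π) = -π / Real.sqrt 6 := by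
    unfold G; rw [Real.sin_neg, Real.sin_pi]; simp
  rw [h, hGpi, hGmpi, div_sub_div_same, div_eq_iff h6]
  rw [mul_assoc, hm]
  ring

lemma cos2 (x : ℝ) : Real.cos (2*x) = 5 - 2 * (2 + Real.sin x ^ 2) := by
  have := Real.sin_sq_add_cos_sq x
  rw [Real.cos_two_mul]
  linarith

lemma I1 : ∫ x in (-π)..π, Real.cos (2*x) / (2 + Real.sin x ^ 2)
    = π * (-4 + 5 * Real.sqrt (2/3)) := by
  have hpt : ∀ x : ℝ, Real.cos (2*x) / (2 + Real.sin x ^ 2)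
      = 5 * (1 / (2 + Real.sin x ^ 2)) - 2 := by
    intro x
    have hD : (2 + Real.sin x ^ 2) ≠ 0 := by positivity
    rw [cos2 x]
    field_simp
  rw [intervalIntegral.integral_congr (g := fun x => 5 * (1 / (2 + Real.sin x ^ 2)) - 2)
    (fun x _ => hpt x)]
  rw [intervalIntegral.integral_sub (f := fun x => 5 * (1 / (2 + Real.sin x ^ 2))) (g := fun _ => 2) ((continuous_const.mul cont_inv).intervalIntegrable _ _)
    (intervalIntegrable_const), intervalIntegral.integral_const_mul, I0,
    intervalIntegral.integral_const]
  simp only [smul_eq_mul, sub_neg_eq_add]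
  ring

lemma cos_zero_int (m : ℝ) (hm : m ≠ 0) (hsin : Real.sin (m * π) = 0) :
    ∫ x in (-π)..π, Real.cos (m * x) = 0 := by
  have hd : ∀ x : ℝ, HasDerivAt (fun x => Real.sin (m * x) / m) (Real.cos (m * x)) x := by
    intro x
    have h1 : HasDerivAt (fun x : ℝ => m * x) m x := by
      simpa using (hasDerivAt_id x).const_mul m
    have := ((Real.hasDerivAt_sin (m * x)).comp x h1).div_const m
    refine this.congr_deriv ?_
    field_simp
  rw [intervalIntegral.integral_eq_sub_of_hasDerivAt (fun x _ => hd x)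
    ((by continuity : Continuous fun x => Real.cos (m * x)).intervalIntegrable _ _)]
  rw [mul_neg, Real.sin_neg, hsin]
  simp

lemma key_rec (n : ℕ) :
    (∫ x in (-π)..π, Real.cos (2*((n:ℝ)+2)*x) / (2 + Real.sin x ^ 2))
    = 10 * (∫ x in (-π)..π, Real.cos (2*((n:ℝ)+1)*x) / (2 + Real.sin x ^ 2))
      - ∫ x in (-π)..π, Real.cos (2*(n:ℝ)*x) / (2 + Real.sin x ^ 2) := by
  have hpt : ∀ x : ℝ, Real.cos (2*((n:ℝ)+2)*x) / (2 + Real.sin x ^ 2)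
      = (10 * (Real.cos (2*((n:ℝ)+1)*x) / (2 + Real.sin x ^ 2))
          - Real.cos (2*(n:ℝ)*x) / (2 + Real.sin x ^ 2))
        - 4 * Real.cos (2*((n:ℝ)+1)*x) := by
    intro x
    have hD : (2 + Real.sin x ^ 2) ≠ 0 := by positivity
    have h1 := Real.cos_add (2*((n:ℝ)+1)*x) (2*x)
    have h2 := Real.cos_sub (2*((n:ℝ)+1)*x) (2*x)
    have e1 : 2*((n:ℝ)+1)*x + 2*x = 2*((n:ℝ)+2)*x := by ring
    have e2 : 2*((n:ℝ)+1)*x - 2*x = 2*(n:ℝ)*x := by ring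
    rw [e1] at h1
    rw [e2] at h2
    have htrig : Real.cos (2*((n:ℝ)+2)*x)
        = 2 * Real.cos (2*((n:ℝ)+1)*x) * Real.cos (2*x) - Real.cos (2*(n:ℝ)*x) := by
      linarith
    rw [htrig, cos2 x]
    field_simp
    ring
  rw [intervalIntegral.integral_congr (fun x _ => hpt x)]
  rw [intervalIntegral.integral_sub (f := fun x => 10 * (Real.cos (2*((n:ℝ)+1)*x) / (2 + Real.sin x ^ 2)) - Real.cos (2*(n:ℝ)*x) / (2 + Real.sin x ^ 2)) (g := fun x => 4 * Real.cos (2*((n:ℝ)+1)*x))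
    ((continuous_const.mul (cont_f (2*((n:ℝ)+1)))).intervalIntegrable _ _ |>.sub
      ((cont_f (2*(n:ℝ))).intervalIntegrable _ _))
    ((continuous_const.mul (by continuity : Continuous fun x => Real.cos (2*((n:ℝ)+1)*x))).intervalIntegrable _ _)]
  rw [intervalIntegral.integral_sub (f := fun x => 10 * (Real.cos (2*((n:ℝ)+1)*x) / (2 + Real.sin x ^ 2))) (g := fun x => Real.cos (2*(n:ℝ)*x) / (2 + Real.sin x ^ 2)) ((continuous_const.mul (cont_f (2*((n:ℝ)+1)))).intervalIntegrable _ _)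
    ((cont_f (2*(n:ℝ))).intervalIntegrable _ _)]
  rw [intervalIntegral.integral_const_mul, intervalIntegral.integral_const_mul]
  rw [cos_zero_int (2*((n:ℝ)+1)) (by positivity)
    (by
      have : (2*((n:ℝ)+1)) * π = ((2*(n+1) : ℕ) : ℝ) * π := by push_cast; ring
      rw [this, Real.sin_nat_mul_pi])]
  ring

theorem stmt_0 (c d : ℕ → ℤ)
    (hc0 : c 0 = 0) (hc1 : c 1 = 4)
    (hc : ∀ n, c (n + 2) = 10 * c (n + 1) - c n)
    (hd0 : d 0 = 1) (hd1 : d 1 = 5)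
    (hd : ∀ n, d (n + 2) = 10 * d (n + 1) - d n) :
    ∀ n : ℕ,
      ∫ x in (-π)..π, Real.cos (2 * n * x) / (2 + Real.sin x ^ 2)
        = π * (-(c n : ℝ) + (d n : ℝ) * Real.sqrt (2 / 3)) := by
  have base0 : ∫ x in (-π)..π, Real.cos (2 * (0:ℕ) * x) / (2 + Real.sin x ^ 2)
      = π * (-(c 0 : ℝ) + (d 0 : ℝ) * Real.sqrt (2 / 3)) := by
    simp only [Nat.cast_zero, mul_zero, zero_mul, Real.cos_zero, hc0, hd0]
    rw [I0]
    push_cast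
    ring
  have base1 : ∫ x in (-π)..π, Real.cos (2 * (1:ℕ) * x) / (2 + Real.sin x ^ 2)
      = π * (-(c 1 : ℝ) + (d 1 : ℝ) * Real.sqrt (2 / 3)) := by
    simp only [Nat.cast_one, mul_one, hc1, hd1]
    rw [I1]
    push_cast
    ring
  have H : ∀ n : ℕ,
      (∫ x in (-π)..π, Real.cos (2 * n * x) / (2 + Real.sin x ^ 2)
        = π * (-(c n : ℝ) + (d n : ℝ) * Real.sqrt (2 / 3)))
      ∧ (∫ x in (-π)..π, Real.cos (2 * (n+1 : ℕ) * x) / (2 + Real.sin x ^ 2)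
        = π * (-(c (n+1) : ℝ) + (d (n+1) : ℝ) * Real.sqrt (2 / 3))) := by
    intro n
    induction n with
    | zero => exact ⟨base0, base1⟩
    | succ k ih =>
      refine ⟨ih.2, ?_⟩
      have hcast2 : ((k+1+1 : ℕ) : ℝ) = (k:ℝ) + 2 := by push_cast; ring
      have hcast1 : ((k+1 : ℕ) : ℝ) = (k:ℝ) + 1 := by push_cast; ring
      rw [show (fun x => Real.cos (2 * ((k+1+1 : ℕ) : ℝ) * x) / (2 + Real.sin x ^ 2))
          = fun x => Real.cos (2 * ((k:ℝ)+2) * x) / (2 + Real.sin x ^ 2) by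
        funext x; rw [hcast2]]
      rw [key_rec k]
      have e1 := ih.1
      have e2 := ih.2
      rw [show (fun x => Real.cos (2 * ((k:ℝ)+1) * x) / (2 + Real.sin x ^ 2))
          = fun x => Real.cos (2 * ((k+1 : ℕ) : ℝ) * x) / (2 + Real.sin x ^ 2) by
        funext x; rw [hcast1]]
      rw [e1, e2, hc k, hd k]
      push_cast
      ring
  exact fun n => (H n).1
end

section
/- For every integer n ≥ 2, the integral over [-π, π] of (10·cos(2(n−1)x) − cos(2(n−2)x) − cos(2nx))/(2 + sin²x) with respect to x equals 0. -/
open Real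

theorem stmt_3 (n : ℤ) (hn : 2 ≤ n) :
    ∫ x in (-π)..π,
        (10 * Real.cos (2 * (n - 1) * x) - Real.cos (2 * (n - 2) * x)
          - Real.cos (2 * n * x)) / (2 + Real.sin x ^ 2) = 0 := by
  set c : ℝ := 2 * ((n : ℝ) - 1) with hc
  have hc0 : c ≠ 0 := by
    have : (1 : ℝ) ≤ (n : ℝ) - 1 := by
      have : (2 : ℝ) ≤ (n : ℝ) := by exact_mod_cast hn
      linarith
    positivity
  have key : ∀ x : ℝ,
      (10 * Real.cos (2 * (n - 1) * x) - Real.cos (2 * (n - 2) * x)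
          - Real.cos (2 * n * x)) / (2 + Real.sin x ^ 2) = 4 * Real.cos (c * x) := by
    intro x
    have hpos : (0 : ℝ) < 2 + Real.sin x ^ 2 := by positivity
    have h1 : ((2 : ℝ) * ((n : ℝ) - 2)) * x = 2 * ((n : ℝ) - 1) * x - 2 * x := by ring
    have h2 : ((2 : ℝ) * (n : ℝ)) * x = 2 * ((n : ℝ) - 1) * x + 2 * x := by ring
    rw [hc, h1, h2, Real.cos_sub, Real.cos_add, Real.cos_two_mul']
    field_simp
    linear_combination (-(2 * Real.cos (2 * ((n:ℝ) - 1) * x))) * Real.sin_sq_add_cos_sq x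
  rw [intervalIntegral.integral_congr (fun x _ => key x)]
  have hderiv : ∀ x : ℝ, HasDerivAt (fun y => 4 / c * Real.sin (c * y))
      (4 * Real.cos (c * x)) x := by
    intro x
    have h := (Real.hasDerivAt_sin (c * x)).comp x ((hasDerivAt_id x).const_mul c)
    simpa using (h.const_mul (4 / c)).congr_deriv (by field_simp)
  have hint : IntervalIntegrable (fun x => 4 * Real.cos (c * x)) MeasureTheory.volume (-π) π :=
    (Continuous.intervalIntegrable (by continuity) _ _)
  rw [intervalIntegral.integral_eq_sub_of_hasDerivAt (fun x _ => hderiv x) hint]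
  have hs1 : Real.sin (c * π) = 0 := by
    have : c * π = (2 * (n - 1) : ℤ) * π := by push_cast [hc]; ring
    rw [this]; exact Real.sin_int_mul_pi _
  have hs2 : Real.sin (c * (-π)) = 0 := by
    have : c * (-π) = (-(2 * (n - 1)) : ℤ) * π := by push_cast [hc]; ring
    rw [this]; exact Real.sin_int_mul_pi _
  simp [hs1, hs2]
end

section
/- For every real number k > 0 and every integer n ≥ 2, the integral over [-π, π] of ((4k+2)·cos(2(n−1)x) − cos(2(n−2)x) − cos(2nx))/(k + sin²x) with respect to x equals 0. -/
open Real

theorem stmt_4 (k : ℝ) (hk : 0 < k) (n : ℤ) (hn : 2 ≤ n) :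
    ∫ x in (-π)..π,
        ((4 * k + 2) * Real.cos (2 * (n - 1) * x) - Real.cos (2 * (n - 2) * x)
          - Real.cos (2 * n * x)) / (k + Real.sin x ^ 2) = 0 := by
  have hc : ((2 : ℝ) * (n - 1)) ≠ 0 := by
    have : (1 : ℝ) ≤ (n : ℝ) - 1 := by
      have : (2 : ℝ) ≤ (n : ℝ) := by exact_mod_cast hn
      linarith
    push_cast
    nlinarith
  have key : ∀ x : ℝ,
      ((4 * k + 2) * Real.cos (2 * (n - 1) * x) - Real.cos (2 * (n - 2) * x)
        - Real.cos (2 * n * x)) / (k + Real.sin x ^ 2)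
      = 4 * Real.cos (2 * (n - 1) * x) := by
    intro x
    have hden : k + Real.sin x ^ 2 ≠ 0 := by positivity
    have h1 : (2 : ℝ) * (n - 2) * x = 2 * (n - 1) * x - 2 * x := by push_cast; ring
    have h2 : (2 : ℝ) * n * x = 2 * (n - 1) * x + 2 * x := by push_cast; ring
    rw [h1, h2, Real.cos_sub, Real.cos_add]
    have h3 : Real.cos (2 * x) = 1 - 2 * Real.sin x ^ 2 := by
      rw [Real.cos_two_mul, Real.sin_sq]; ring
    rw [h3]
    field_simp
    ring
  rw [intervalIntegral.integral_congr (fun x _ => key x)]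
  have : ∫ x in (-π)..π, 4 * Real.cos (2 * (n - 1) * x)
      = 4 * ∫ x in (-π)..π, Real.cos (2 * (n - 1) * x) := by
    rw [intervalIntegral.integral_const_mul]
  rw [this, intervalIntegral.integral_comp_mul_left (fun y => Real.cos y) hc,
    integral_cos]
  have hs1 : Real.sin (2 * ((n : ℝ) - 1) * π) = 0 := by
    have : (2 * ((n : ℝ) - 1)) * π = ((2 * (n - 1) : ℤ) : ℝ) * π := by push_cast; ring
    rw [this, Real.sin_int_mul_pi]
  have hs2 : Real.sin (2 * ((n : ℝ) - 1) * (-π)) = 0 := by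
    have : (2 * ((n : ℝ) - 1)) * (-π) = ((-(2 * (n - 1)) : ℤ) : ℝ) * π := by push_cast; ring
    rw [this, Real.sin_int_mul_pi]
  rw [hs1, hs2]
  simp
end

section
/- For every real number k > 0, the integral over [-π, π] of 1/(k + sin²x) with respect to x equals 2π·√(1 + 1/k)/(1 + k), equivalently 2π/√(k(k+1)). -/
open Real

theorem stmt_5 (k : ℝ) (hk : 0 < k) :
    (∫ x in (-π)..π, 1 / (k + Real.sin x ^ 2))
        = 2 * π * Real.sqrt (1 + 1 / k) / (1 + k)
      ∧ (∫ x in (-π)..π, 1 / (k + Real.sin x ^ 2))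
        = 2 * π / Real.sqrt (k * (k + 1)) := by
  have hk1 : (0:ℝ) < k * (k + 1) := by positivity
  set s := Real.sqrt (k * (k + 1)) with hs_def
  have hs0 : 0 < s := Real.sqrt_pos.mpr hk1
  have hs2 : s ^ 2 = k * (k + 1) := Real.sq_sqrt hk1.le
  set t : ℝ := 2 * k + 1 + 2 * s with ht_def
  have ht1 : 1 < t := by nlinarith
  have ht0 : (0:ℝ) < t := by linarith
  have htt : t ^ 2 + 1 = 2 * t * (2 * k + 1) := by rw [ht_def]; linear_combination 4 * hs2
  have ht2 : t ^ 2 - 1 = 4 * s * t := by rw [ht_def]; linear_combination (-4) * hs2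
  have key : ∀ x : ℝ,
      HasDerivAt (fun y => (2 * y - 2 * Real.arctan (Real.sin (2 * y) / (Real.cos (2 * y) - t))) / (2 * s))
        (1 / (k + Real.sin x ^ 2)) x := by
    intro x
    have hden : Real.cos (2 * x) - t ≠ 0 := by nlinarith [Real.cos_le_one (2 * x)]
    have h2x : HasDerivAt (fun y : ℝ => 2 * y) 2 x := by
      simpa using (hasDerivAt_id x).const_mul 2
    have h1 : HasDerivAt (fun y => Real.sin (2 * y)) (Real.cos (2 * x) * 2) x :=
      (Real.hasDerivAt_sin (2 * x)).comp x h2x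
    have h2 : HasDerivAt (fun y => Real.cos (2 * y) - t) (-Real.sin (2 * x) * 2) x :=
      ((Real.hasDerivAt_cos (2 * x)).comp x h2x).sub_const t
    have hq : HasDerivAt (fun y => Real.sin (2 * y) / (Real.cos (2 * y) - t))
        ((Real.cos (2 * x) * 2 * (Real.cos (2 * x) - t) -
          Real.sin (2 * x) * (-Real.sin (2 * x) * 2)) / (Real.cos (2 * x) - t) ^ 2) x :=
      h1.div h2 hden
    have harc := hq.arctan
    have hfull := (h2x.sub (harc.const_mul 2)).div_const (2 * s)
    convert hfull using 1
    · rfl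
    · rfl
    · rfl
    set c := Real.cos (2 * x) with hc_def
    set sn := Real.sin (2 * x) with hsn_def
    have hsc : sn ^ 2 + c ^ 2 = 1 := Real.sin_sq_add_cos_sq (2 * x)
    have hcos2 : c = 1 - 2 * Real.sin x ^ 2 := by
      rw [hc_def, Real.cos_two_mul]
      have := Real.sin_sq_add_cos_sq x
      nlinarith
    have hpos : (0:ℝ) < k + Real.sin x ^ 2 := by positivity
    have hsum : (c - t) ^ 2 + sn ^ 2 = 2 * t * (2 * k + 1 - c) := by
      rw [ht_def]; nlinarith [hs2, hsc]
    have h1' : 1 / (1 + (sn / (c - t)) ^ 2) * ((c * 2 * (c - t) - sn * (-sn * 2)) / (c - t) ^ 2)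
        = (2 - 2 * t * c) / (2 * t * (2 * k + 1 - c)) := by
      rw [div_mul_div_comm, one_mul, ← hsum]
      have he : (1 + (sn / (c - t)) ^ 2) * (c - t) ^ 2 = (c - t) ^ 2 + sn ^ 2 := by
        field_simp
      rw [he]
      congr 1
      linear_combination 2 * hsc
    rw [h1', hcos2]
    have h2' : (2:ℝ) * k + 1 - (1 - 2 * Real.sin x ^ 2) = 2 * (k + Real.sin x ^ 2) := by ring
    rw [h2']
    have hD : 2 * t * (2 * (k + Real.sin x ^ 2)) ≠ 0 := by positivity
    have step0 : (2:ℝ) - 2 * ((2 - 2 * t * (1 - 2 * Real.sin x ^ 2)) / (2 * t * (2 * (k + Real.sin x ^ 2))))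
        = (2 * (2 * t * (2 * (k + Real.sin x ^ 2))) - 2 * (2 - 2 * t * (1 - 2 * Real.sin x ^ 2)))
            / (2 * t * (2 * (k + Real.sin x ^ 2))) := by
      field_simp
    have step1 : (2 * (2 * t * (2 * (k + Real.sin x ^ 2))) - 2 * (2 - 2 * t * (1 - 2 * Real.sin x ^ 2)))
            / (2 * t * (2 * (k + Real.sin x ^ 2)))
        = 2 * s / (k + Real.sin x ^ 2) := by
      rw [div_eq_div_iff hD hpos.ne']
      linear_combination (-2 * (k + Real.sin x ^ 2)) * htt + (2 * (k + Real.sin x ^ 2)) * ht2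
    rw [step0, step1]
    field_simp
  have hcont : Continuous fun x => 1 / (k + Real.sin x ^ 2) :=
    continuous_const.div (by continuity) fun x => by positivity
  have hint := intervalIntegral.integral_eq_sub_of_hasDerivAt
    (f := fun y => (2 * y - 2 * Real.arctan (Real.sin (2 * y) / (Real.cos (2 * y) - t))) / (2 * s))
    (fun x _ => key x) (hcont.intervalIntegrable (-π) π)
  have hsin : Real.sin (2 * π) = 0 := Real.sin_two_pi
  have hsin' : Real.sin (2 * -π) = 0 := by
    rw [show (2 : ℝ) * -π = -(2 * π) by ring, Real.sin_neg, hsin, neg_zero]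
  have hval : (∫ x in (-π)..π, 1 / (k + Real.sin x ^ 2)) = 2 * π / s := by
    rw [hint]
    simp only [hsin, hsin', zero_div, Real.arctan_zero, mul_zero, sub_zero]
    field_simp
    ring
  refine ⟨?_, hval⟩
  rw [hval]
  have h1k : Real.sqrt (1 + 1 / k) = s / k := by
    rw [show (1 + 1 / k) = (s / k) ^ 2 by
      rw [div_pow, hs2]; field_simp]
    exact Real.sqrt_sq (by positivity)
  rw [h1k]
  field_simp
  linear_combination (-1) * hs2
end

section
/- For every real number k > 0, the integral over [-π, π] of cos(2x)/(k + sin²x) with respect to x equals π·(−4 + (2k+1)·2/√(k(k+1))). -/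
open Real

set_option maxHeartbeats 1000000 in
theorem stmt_6 (k : ℝ) (hk : 0 < k) :
    ∫ x in (-π)..π, Real.cos (2 * x) / (k + Real.sin x ^ 2)
      = π * (-4 + (2 * k + 1) * 2 / Real.sqrt (k * (k + 1))) := by
  have hkk : (0:ℝ) < k * (k+1) := by positivity
  set a : ℝ := 2*k+1 with ha
  set s : ℝ := 2 * Real.sqrt (k*(k+1)) with hs
  have hs0 : 0 < s := by positivity
  have hsq : Real.sqrt (k*(k+1))^2 = k*(k+1) := Real.sq_sqrt (le_of_lt hkk)
  have hs2 : s^2 = a^2 - 1 := by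
    rw [hs, mul_pow, hsq]; ring
  set b : ℝ := a - s with hb
  have ha1 : (1:ℝ) < a := by simp [ha]; linarith
  have hsa : s < a := by nlinarith [hs2, hs0, ha1]
  have hb0 : 0 < b := by rw [hb]; linarith
  have hb1 : b < 1 := by nlinarith [hs0, hs2]
  have h2ab : 1 + b^2 = 2*a*b := by rw [hb]; nlinarith [hs2]
  set F : ℝ → ℝ := fun x => -2*x + (a/s)*(2*x + 2*Real.arctan (b * Real.sin (2*x)/(1 - b * Real.cos (2*x)))) with hF
  have hderiv : ∀ x : ℝ, HasDerivAt F (Real.cos (2*x)/(k + Real.sin x ^2)) x := by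
    intro x
    have hc1 : |Real.cos (2*x)| ≤ 1 := Real.abs_cos_le_one _
    set c := Real.cos (2*x) with hc
    set sn := Real.sin (2*x) with hsn
    have hpy : sn^2 + c^2 = 1 := Real.sin_sq_add_cos_sq _
    have hbc : 0 < 1 - b*c := by
      have : b*c ≤ |b*c| := le_abs_self _
      have : |b*c| = b*|c| := by rw [abs_mul, abs_of_pos hb0]
      nlinarith [le_abs_self (b*c), abs_mul b c, abs_of_pos hb0]
    have hac : 0 < a - c := by
      have := abs_le.mp hc1
      linarith [this.2]
    have h2x : HasDerivAt (fun y : ℝ => 2*y) 2 x := by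
      simpa using (hasDerivAt_id x).const_mul 2
    have hsin' : HasDerivAt (fun y => Real.sin (2*y)) (c * 2) x :=
      (Real.hasDerivAt_sin (2*x)).comp x h2x
    have hcos' : HasDerivAt (fun y => Real.cos (2*y)) (-sn * 2) x :=
      (Real.hasDerivAt_cos (2*x)).comp x h2x
    have hnum : HasDerivAt (fun y => b * Real.sin (2*y)) (b * (c*2)) x := hsin'.const_mul b
    have hden : HasDerivAt (fun y => 1 - b * Real.cos (2*y)) (-(b * (-sn*2))) x :=
      (hcos'.const_mul b).const_sub 1
    have hg : HasDerivAt (fun y => b * Real.sin (2*y) / (1 - b * Real.cos (2*y)))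
        ((b*(c*2)*(1-b*c) - b*sn*(-(b * (-sn*2))))/(1-b*c)^2) x := hnum.div hden (ne_of_gt hbc)
    have harc : HasDerivAt (fun y => Real.arctan (b * Real.sin (2*y) / (1 - b * Real.cos (2*y))))
        ((1/(1+(b*sn/(1-b*c))^2)) * ((b*(c*2)*(1-b*c) - b*sn*(-(b * (-sn*2))))/(1-b*c)^2)) x :=
      by have h := (Real.hasDerivAt_arctan (b * Real.sin (2*x) / (1 - b * Real.cos (2*x)))).comp x hg; exact h
    have hinner : HasDerivAt (fun y => 2*y + 2*Real.arctan (b * Real.sin (2*y) / (1 - b * Real.cos (2*y))))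
        (2 + 2*((1/(1+(b*sn/(1-b*c))^2)) * ((b*(c*2)*(1-b*c) - b*sn*(-(b * (-sn*2))))/(1-b*c)^2))) x :=
      h2x.add (harc.const_mul 2)
    have hneg : HasDerivAt (fun y : ℝ => -2*y) (-2) x := by
      simpa using (hasDerivAt_id x).const_mul (-2)
    have hFd : HasDerivAt F
        (-2 + (a/s) * (2 + 2*((1/(1+(b*sn/(1-b*c))^2)) * ((b*(c*2)*(1-b*c) - b*sn*(-(b * (-sn*2))))/(1-b*c)^2)))) x :=
      hneg.add (hinner.const_mul (a/s))
    convert hFd using 1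
    have hks : k + Real.sin x^2 = (a - c)/2 := by
      rw [ha, hc, Real.cos_two_mul']; linear_combination (1/2) * Real.sin_sq_add_cos_sq x
    have hkey : (1-b*c)^2 + (b*sn)^2 = 2*b*(a-c) := by nlinarith [hpy, h2ab]
    have hero : 1 + (b*sn/(1-b*c))^2 = (2*b*(a-c))/(1-b*c)^2 := by
      field_simp
      linear_combination hkey
    have hnum2 : b*(c*2)*(1-b*c) - b*sn*(-(b * (-sn*2))) = 2*b*(c-b) := by
      linear_combination (-(2*b^2))*hpy
    have hgd : (1/(1+(b*sn/(1-b*c))^2)) * ((b*(c*2)*(1-b*c) - b*sn*(-(b * (-sn*2))))/(1-b*c)^2)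
        = (c-b)/(a-c) := by
      rw [hero, hnum2]
      field_simp
    rw [hgd, hks]
    have hsab : s = a - b := by rw [hb]; ring
    rw [hsab]
    have hab : a - b ≠ 0 := by rw [← hsab]; exact ne_of_gt hs0
    field_simp
    ring
  have hcont : Continuous (fun x : ℝ => Real.cos (2*x)/(k + Real.sin x^2)) := by
    have h1 : Continuous fun x : ℝ => Real.cos (2*x) :=
      Real.continuous_cos.comp (continuous_const.mul continuous_id)
    have h2 : Continuous fun x : ℝ => k + Real.sin x^2 :=
      continuous_const.add (Real.continuous_sin.pow 2)
    exact h1.div h2 (fun x => by positivity)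
  rw [intervalIntegral.integral_eq_sub_of_hasDerivAt (fun x _ => hderiv x)
    (hcont.intervalIntegrable _ _)]
  have h1 : Real.sin (2*π) = 0 := Real.sin_two_pi
  have h2 : Real.sin (2*(-π)) = 0 := by rw [mul_neg, Real.sin_neg, h1, neg_zero]
  simp only [hF, h1, h2, mul_zero, zero_div, Real.arctan_zero]
  have hne : Real.sqrt (k*(k+1)) ≠ 0 := by positivity
  field_simp [hs]
  ring
end

section
/- Fix a real number k > 0. For every natural number n, the integral over [-π, π] of cos(2nx)/(k + sin²x) with respect to x equals π·(−y(n) + z(n)·2/√(k(k+1))), where y and z are the sequences defined by y(0) = 0, y(1) = 4, y(n) = (4k+2)·y(n−1) − y(n−2), and z(0) = 1, z(1) = 2k+1, z(n) = (4k+2)·z(n−1) − z(n−2). -/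
open Real MeasureTheory intervalIntegral

lemma aux_deriv (k s : ℝ) (hk : 0 < k) (hs2 : s^2 = k^2 + k) (hks : k < s) (x : ℝ) :
    HasDerivAt (fun x => (1/s) * (x + Real.arctan ((s-k)*Real.sin (2*x) /
      ((s+k) - (s-k)*Real.cos (2*x))))) (1/(k + Real.sin x^2)) x := by
  have hs0 : 0 < s := hk.trans hks
  have hD : 0 < (s+k) - (s-k)*Real.cos (2*x) := by
    nlinarith [Real.cos_le_one (2*x), Real.neg_one_le_cos (2*x)]
  have h2x : HasDerivAt (fun x : ℝ => 2*x) 2 x := by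
    simpa using (hasDerivAt_id x).const_mul (2:ℝ)
  have hsin : HasDerivAt (fun x => Real.sin (2*x)) (Real.cos (2*x) * 2) x :=
    (Real.hasDerivAt_sin (2*x)).comp x h2x
  have hcos : HasDerivAt (fun x => Real.cos (2*x)) (-Real.sin (2*x) * 2) x :=
    (Real.hasDerivAt_cos (2*x)).comp x h2x
  have hN : HasDerivAt (fun x => (s-k)*Real.sin (2*x)) ((s-k)*(Real.cos (2*x)*2)) x :=
    hsin.const_mul _
  have hDen : HasDerivAt (fun x => (s+k) - (s-k)*Real.cos (2*x))
      (0 - (s-k)*(-Real.sin (2*x)*2)) x :=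
    (hasDerivAt_const x (s+k)).sub (hcos.const_mul _)
  have hu := hN.div hDen hD.ne'
  have hat := (Real.hasDerivAt_arctan _).comp x hu
  have hF := ((hasDerivAt_id x).add hat).const_mul (1/s)
  refine hF.congr_deriv (Eq.symm ?_)
  simp only [Pi.div_apply]
  rw [Real.cos_two_mul, Real.sin_two_mul]
  set t := Real.sin x with ht
  set c := Real.cos x with hcdef
  have hc' : c^2 = 1 - t^2 := by
    have := Real.sin_sq_add_cos_sq x; rw [← ht, ← hcdef] at this; linarith
  have hkt : 0 < k + t^2 := by positivity
  have hD' : 0 < s + k - (s-k)*(2*c^2-1) := by nlinarith [sq_nonneg c, sq_nonneg t]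
  have hDM : (s + k - (s-k)*(2*c^2-1))^2 + ((s-k)*(2*t*c))^2 = 4*k*(k+t^2) := by
    linear_combination (-8*k*(s-k) + 4*(s-k)^2*c^2 - 4*(s-k)^2) * hc' + 4*t^2 * hs2
  have hW : (s-k)*((2*c^2-1)*2)*(s+k-(s-k)*(2*c^2-1)) - (s-k)*(2*t*c)*(0-(s-k)*(-(2*t*c)*2))
      = 4*k*s - 4*k*(k+t^2) := by
    linear_combination (4*(s^2-k^2) - 8*(s-k)^2*c^2) * hc' + (-4*t^2) * hs2
  have h1u : 1 + ((s-k)*(2*t*c)/(s+k-(s-k)*(2*c^2-1)))^2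
      = ((s + k - (s-k)*(2*c^2-1))^2 + ((s-k)*(2*t*c))^2)/(s+k-(s-k)*(2*c^2-1))^2 := by
    field_simp
  rw [h1u, hDM, hW, one_div_div]
  field_simp
  ring

lemma aux_cos_int (c : ℝ) (hc : c ≠ 0) :
    ∫ x in (-π)..π, Real.cos (c*x) = Real.sin (c*π)/c - Real.sin (c*(-π))/c := by
  have := intervalIntegral.integral_eq_sub_of_hasDerivAt
    (f := fun x : ℝ => Real.sin (c*x)/c) (f' := fun x : ℝ => Real.cos (c*x))
    (a := -π) (b := π) ?_ ?_
  · simpa using this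
  · intro x _
    have h1 : HasDerivAt (fun x : ℝ => c*x) c x := by
      simpa using (hasDerivAt_id x).const_mul c
    have := ((Real.hasDerivAt_sin (c*x)).comp x h1).div_const c
    refine this.congr_deriv ?_
    field_simp
  · exact (Real.continuous_cos.comp (continuous_const.mul continuous_id)).intervalIntegrable _ _

lemma aux_cos_int_zero (m : ℕ) :
    ∫ x in (-π)..π, Real.cos (2*((m:ℝ)+1)*x) = 0 := by
  have hc : (2*((m:ℝ)+1)) ≠ 0 := by positivity
  rw [aux_cos_int _ hc]
  have h1 : 2*((m:ℝ)+1)*π = ((2*m+2 : ℕ) : ℝ) * π := by push_cast; ring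
  have h2 : Real.sin (2*((m:ℝ)+1)*π) = 0 := by rw [h1]; exact Real.sin_nat_mul_pi _
  have h3 : Real.sin (2*((m:ℝ)+1)*(-π)) = 0 := by
    rw [show 2*((m:ℝ)+1)*(-π) = -(2*((m:ℝ)+1)*π) by ring, Real.sin_neg, h2, neg_zero]
  rw [h2, h3]; simp

lemma aux_I0 (k s : ℝ) (hk : 0 < k) (hs2 : s^2 = k^2 + k) (hks : k < s) :
    ∫ x in (-π)..π, 1/(k + Real.sin x^2) = 2*π/s := by
  have hs0 : 0 < s := hk.trans hks
  have := intervalIntegral.integral_eq_sub_of_hasDerivAt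
    (f := fun x => (1/s) * (x + Real.arctan ((s-k)*Real.sin (2*x) /
      ((s+k) - (s-k)*Real.cos (2*x)))))
    (f' := fun x => 1/(k + Real.sin x^2)) (a := -π) (b := π)
    (fun x _ => aux_deriv k s hk hs2 hks x) ?_
  · rw [this]
    have e1 : Real.sin (2*π) = 0 := Real.sin_two_pi
    have e2 : Real.sin (2*(-π)) = 0 := by
      rw [show 2*(-π) = -(2*π) by ring, Real.sin_neg, e1, neg_zero]
    rw [e1, e2]
    simp
    ring
  · apply Continuous.intervalIntegrable
    apply Continuous.div continuous_const
    · continuity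
    · intro x; positivity

theorem stmt_7 (k : ℝ) (hk : 0 < k) (y z : ℕ → ℝ)
    (hy0 : y 0 = 0) (hy1 : y 1 = 4)
    (hy : ∀ n, y (n + 2) = (4 * k + 2) * y (n + 1) - y n)
    (hz0 : z 0 = 1) (hz1 : z 1 = 2 * k + 1)
    (hz : ∀ n, z (n + 2) = (4 * k + 2) * z (n + 1) - z n) :
    ∀ n : ℕ,
      ∫ x in (-π)..π, Real.cos (2 * n * x) / (k + Real.sin x ^ 2)
        = π * (-y n + z n * 2 / Real.sqrt (k * (k + 1))) := by
  set s := Real.sqrt (k * (k + 1)) with hsdef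
  have hs2 : s^2 = k^2 + k := by
    rw [hsdef, Real.sq_sqrt (by positivity)]; ring
  have hks : k < s := by nlinarith [Real.sqrt_nonneg (k*(k+1)), hs2]
  have hs0 : 0 < s := hk.trans hks
  have hkx : ∀ x : ℝ, 0 < k + Real.sin x ^ 2 := fun x => by positivity
  -- integrability
  have hInt : ∀ g : ℝ → ℝ, Continuous g →
      IntervalIntegrable (fun x => g x / (k + Real.sin x ^ 2)) volume (-π) π := by
    intro g hg
    apply Continuous.intervalIntegrable
    exact hg.div (continuous_const.add (Real.continuous_sin.pow 2)) (fun x => (hkx x).ne')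
  have hIntc : ∀ c : ℝ, IntervalIntegrable (fun x => Real.cos (c*x) / (k + Real.sin x ^ 2))
      volume (-π) π := fun c => hInt _ (Real.continuous_cos.comp (continuous_const.mul continuous_id))
  have hIntcos : ∀ c : ℝ, IntervalIntegrable (fun x => Real.cos (c*x)) volume (-π) π :=
    fun c => (Real.continuous_cos.comp (continuous_const.mul continuous_id)).intervalIntegrable _ _
  -- base case 0
  have P0 : ∫ x in (-π)..π, Real.cos (2 * (0:ℕ) * x) / (k + Real.sin x ^ 2)
      = π * (-y 0 + z 0 * 2 / s) := by
    have : ∀ x : ℝ, Real.cos (2 * ((0:ℕ):ℝ) * x) / (k + Real.sin x ^ 2)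
        = 1 / (k + Real.sin x ^ 2) := by intro x; norm_num
    rw [intervalIntegral.integral_congr (fun x _ => this x), aux_I0 k s hk hs2 hks,
      hy0, hz0]
    field_simp; ring
  -- base case 1
  have P1 : ∫ x in (-π)..π, Real.cos (2 * (1:ℕ) * x) / (k + Real.sin x ^ 2)
      = π * (-y 1 + z 1 * 2 / s) := by
    have key : ∀ x : ℝ, Real.cos (2 * ((1:ℕ):ℝ) * x) / (k + Real.sin x ^ 2)
        = (2*k+1) * (Real.cos (0*x) / (k + Real.sin x ^ 2)) - 2 := by
      intro x
      have h2 : Real.cos (2 * ((1:ℕ):ℝ) * x) = 1 - 2 * Real.sin x ^ 2 := by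
        push_cast
        rw [show (2:ℝ) * 1 * x = 2 * x by ring, Real.cos_two_mul, Real.cos_sq']
        ring
      rw [h2, zero_mul, Real.cos_zero]
      field_simp
      ring
    rw [intervalIntegral.integral_congr (fun x _ => key x)]
    rw [intervalIntegral.integral_sub (((hIntc 0).const_mul _)) intervalIntegrable_const,
      intervalIntegral.integral_const_mul, intervalIntegral.integral_const]
    have : ∀ x : ℝ, Real.cos (0*x) / (k + Real.sin x ^ 2) = 1 / (k + Real.sin x ^ 2) := by
      intro x; rw [zero_mul, Real.cos_zero]
    rw [intervalIntegral.integral_congr (fun x _ => this x), aux_I0 k s hk hs2 hks,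
      hy1, hz1]
    rw [smul_eq_mul]
    field_simp
    ring
  -- inductive step
  have step : ∀ n : ℕ,
      (∫ x in (-π)..π, Real.cos (2 * (n:ℕ) * x) / (k + Real.sin x ^ 2)
        = π * (-y n + z n * 2 / s)) →
      (∫ x in (-π)..π, Real.cos (2 * ((n+1:ℕ):ℝ) * x) / (k + Real.sin x ^ 2)
        = π * (-y (n+1) + z (n+1) * 2 / s)) →
      (∫ x in (-π)..π, Real.cos (2 * ((n+2:ℕ):ℝ) * x) / (k + Real.sin x ^ 2)
        = π * (-y (n+2) + z (n+2) * 2 / s)) := by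
    intro n ihn ihn1
    have key : ∀ x : ℝ, Real.cos (2 * ((n+2:ℕ):ℝ) * x) / (k + Real.sin x ^ 2)
        = (4*k+2) * (Real.cos ((2 * ((n+1:ℕ):ℝ)) * x) / (k + Real.sin x ^ 2))
          - 4 * Real.cos ((2 * ((n:ℝ)+1)) * x)
          - Real.cos ((2 * ((n:ℕ):ℝ)) * x) / (k + Real.sin x ^ 2) := by
      intro x
      have hsum : Real.cos (2 * ((n+2:ℕ):ℝ) * x)
          = 2 * Real.cos (2 * ((n+1:ℕ):ℝ) * x) * Real.cos (2*x)
            - Real.cos (2 * ((n:ℕ):ℝ) * x) := by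
        have e1 : 2 * ((n+2:ℕ):ℝ) * x = 2 * ((n+1:ℕ):ℝ) * x + 2 * x := by push_cast; ring
        have e2 : 2 * ((n:ℕ):ℝ) * x = 2 * ((n+1:ℕ):ℝ) * x - 2 * x := by push_cast; ring
        rw [e1, e2, Real.cos_add, Real.cos_sub]; ring
      have hc2 : Real.cos (2*x) = (2*k+1) - 2*(k + Real.sin x ^ 2) := by
        rw [Real.cos_two_mul, Real.cos_sq']; ring
      have hcast : ((n:ℝ)+1) = ((n+1:ℕ):ℝ) := by push_cast; ring
      rw [hsum, hc2, hcast]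
      field_simp
      ring
    rw [intervalIntegral.integral_congr (fun x _ => key x)]
    rw [intervalIntegral.integral_sub (IntervalIntegrable.sub ((hIntc _).const_mul _)
        ((hIntcos _).const_mul _)) (hIntc _)]
    rw [intervalIntegral.integral_sub ((hIntc _).const_mul _) ((hIntcos _).const_mul _)]
    rw [intervalIntegral.integral_const_mul, intervalIntegral.integral_const_mul]
    rw [aux_cos_int_zero n, ihn, ihn1, hy n, hz n]
    ring
  -- finish by induction
  intro n
  induction n using Nat.twoStepInduction with
  | zero => exact P0
  | one => exact P1
  | more m ih1 ih2 => exact step m ih1 ih2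
end

section
/- For every real number k > 0 and every natural number n ≥ 1, the integral over [-π, π] of cos(nx)/(k + sin²x) with respect to x equals ((−1)ⁿ + 1)/2 · π · ( −((2k+1 + 2√(k(k+1)))^⌊n/2⌋ − (2k+1 − 2√(k(k+1)))^⌊n/2⌋)/√(k(k+1)) + cosh(2⌊n/2⌋·arsinh(√k))·2/√(k(k+1)) ). -/
open Real intervalIntegral

lemma den_pos {c : ℝ} (hc : 1 < c) (x : ℝ) : 0 < c - Real.cos x := by
  have := Real.cos_le_one x; linarith

lemma intg_cos_div (c : ℝ) (hc : 1 < c) (m : ℕ) (a b : ℝ) :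
    IntervalIntegrable (fun x => Real.cos (m * x) / (c - Real.cos x)) MeasureTheory.volume a b := by
  apply Continuous.intervalIntegrable
  exact (Real.continuous_cos.comp (continuous_const.mul continuous_id)).div
    (continuous_const.sub Real.continuous_cos) (fun x => (den_pos hc x).ne')

lemma integral_one_div_sub_cos (c : ℝ) (hc : 1 < c) :
    ∫ x in (-π)..π, 1 / (c - Real.cos x) = 2 * π / Real.sqrt (c ^ 2 - 1) := by
  set s := Real.sqrt (c ^ 2 - 1) with hs_def
  have hc0 : (0:ℝ) < c := by linarith
  have hs2 : s ^ 2 = c ^ 2 - 1 := Real.sq_sqrt (by nlinarith)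
  have hs0 : 0 < s := Real.sqrt_pos.2 (by nlinarith)
  have hsc : s < c := by nlinarith
  set r := c - s with hr_def
  have hr0 : 0 < r := by simp [hr_def]; linarith
  have hr1 : r < 1 := by nlinarith
  have hrr : r ^ 2 = 2 * c * r - 1 := by simp [hr_def]; nlinarith
  have hcr : c - r = s := by simp [hr_def]
  clear_value r
  clear_value s
  set F : ℝ → ℝ := fun x => (x + 2 * Real.arctan (r * Real.sin x / (1 - r * Real.cos x))) / s with hF
  have hderiv : ∀ x ∈ Set.uIcc (-π) π, HasDerivAt F (1 / (c - Real.cos x)) x := by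
    intro x _
    have hdx : 0 < c - Real.cos x := den_pos hc x
    have hne : 1 - r * Real.cos x ≠ 0 := by
      have h1 : r * Real.cos x < 1 := by
        calc r * Real.cos x ≤ r * 1 := by nlinarith [Real.cos_le_one x]
        _ < 1 := by linarith
      linarith
    have hu : HasDerivAt (fun x => r * Real.sin x / (1 - r * Real.cos x))
        ((r * Real.cos x * (1 - r * Real.cos x) - r * Real.sin x * -(r * -Real.sin x))
          / (1 - r * Real.cos x) ^ 2) x := by
      exact (((Real.hasDerivAt_sin x).const_mul r).div
        (((Real.hasDerivAt_cos x).const_mul r).const_sub 1) hne)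
    have harc := (Real.hasDerivAt_arctan (r * Real.sin x / (1 - r * Real.cos x))).comp x hu
    have h1 : HasDerivAt F ((1 + 2 * (1 / (1 + (r * Real.sin x / (1 - r * Real.cos x)) ^ 2) *
        ((r * Real.cos x * (1 - r * Real.cos x) - r * Real.sin x * -(r * -Real.sin x))
          / (1 - r * Real.cos x) ^ 2))) / s) x :=
      ((hasDerivAt_id x).add (harc.const_mul 2)).div_const s
    convert h1 using 1
    have pyth := Real.sin_sq_add_cos_sq x
    have hnum : r * Real.cos x * (1 - r * Real.cos x) - r * Real.sin x * -(r * -Real.sin x)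
        = r * Real.cos x - r ^ 2 := by linear_combination (-(r^2)) * pyth
    have hden2 : ((1:ℝ) - r * Real.cos x) ^ 2 + (r * Real.sin x) ^ 2
        = 2 * r * (c - Real.cos x) := by linear_combination r^2 * pyth + hrr
    have e1 : (1:ℝ) + (r * Real.sin x / (1 - r * Real.cos x)) ^ 2
        = 2 * r * (c - Real.cos x) / (1 - r * Real.cos x) ^ 2 := by
      field_simp
      linear_combination hden2
    rw [hnum, e1]
    field_simp
    rw [mul_div_cancel_left₀ _ (by rwa [mul_comm] at hne)]
    linear_combination (-1) * hcr
  have hint : IntervalIntegrable (fun x => 1 / (c - Real.cos x)) MeasureTheory.volume (-π) π := by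
    apply Continuous.intervalIntegrable
    exact continuous_const.div (continuous_const.sub Real.continuous_cos)
      (fun x => (den_pos hc x).ne')
  rw [intervalIntegral.integral_eq_sub_of_hasDerivAt hderiv hint]
  simp [hF, Real.sin_pi, Real.arctan_zero]
  ring

lemma integral_cos_nat_mul (m : ℕ) (hm : 1 ≤ m) :
    ∫ x in (-π)..π, Real.cos (m * x) = 0 := by
  have ha : (m : ℝ) ≠ 0 := Nat.cast_ne_zero.2 (by omega)
  have hder : ∀ x ∈ Set.uIcc (-π) π,
      HasDerivAt (fun x => Real.sin (m * x) / m) (Real.cos (m * x)) x := by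
    intro x _
    have h := ((Real.hasDerivAt_sin ((m:ℝ) * x)).comp x
      ((hasDerivAt_id x).const_mul (m:ℝ))).div_const (m:ℝ)
    exact h.congr_deriv (by field_simp)
  rw [intervalIntegral.integral_eq_sub_of_hasDerivAt hder
    (Continuous.intervalIntegrable (by continuity) _ _)]
  have h1 : Real.sin ((m:ℝ) * π) = 0 := Real.sin_nat_mul_pi m
  have h2 : Real.sin ((m:ℝ) * (-π)) = 0 := by
    rw [mul_neg, Real.sin_neg, h1, neg_zero]
  rw [h1, h2]
  ring

lemma integral_cos_mul_div (c : ℝ) (hc : 1 < c) (m : ℕ) :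
    ∫ x in (-π)..π, Real.cos (m * x) / (c - Real.cos x)
      = (c - Real.sqrt (c ^ 2 - 1)) ^ m * (2 * π / Real.sqrt (c ^ 2 - 1)) := by
  set s := Real.sqrt (c ^ 2 - 1) with hs_def
  have hc0 : (0:ℝ) < c := by linarith
  have hs2 : s ^ 2 = c ^ 2 - 1 := Real.sq_sqrt (by nlinarith)
  have hs0 : 0 < s := Real.sqrt_pos.2 (by nlinarith)
  have hsc : s < c := by nlinarith
  have hI0 : ∫ x in (-π)..π, 1 / (c - Real.cos x) = 2 * π / s :=
    integral_one_div_sub_cos c hc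
  induction m using Nat.twoStepInduction with
  | zero =>
    simpa using hI0
  | one =>
    have key : ∀ x : ℝ, Real.cos ((1:ℕ) * x) / (c - Real.cos x)
        = c * (1 / (c - Real.cos x)) - 1 := by
      intro x
      have hdx := den_pos hc x
      field_simp
      simp
    rw [intervalIntegral.integral_congr (g :=
      fun x => c * (1 / (c - Real.cos x)) - 1) (fun x _ => key x)]
    rw [intervalIntegral.integral_sub
      ((Continuous.intervalIntegrable (by fun_prop (disch := exact fun x => (den_pos hc x).ne')) _ _))
      intervalIntegrable_const]
    rw [intervalIntegral.integral_const_mul, hI0]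
    simp only [intervalIntegral.integral_const, smul_eq_mul, mul_one, pow_one]
    rw [sub_neg_eq_add]
    field_simp
    ring
  | more m ih0 ih1 =>
    have hdx := den_pos hc
    have key : ∀ x : ℝ, Real.cos (((m+2 : ℕ) : ℝ) * x) / (c - Real.cos x)
        = 2 * c * (Real.cos (((m+1 : ℕ) : ℝ) * x) / (c - Real.cos x))
          - Real.cos ((m : ℝ) * x) / (c - Real.cos x)
          - 2 * Real.cos (((m+1 : ℕ) : ℝ) * x) := by
      intro x
      have trig : Real.cos (((m+2 : ℕ) : ℝ) * x) + Real.cos ((m : ℝ) * x)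
          = 2 * Real.cos x * Real.cos (((m+1 : ℕ) : ℝ) * x) := by
        have h1 : ((m+2 : ℕ) : ℝ) * x = ((m+1 : ℕ) : ℝ) * x + x := by push_cast; ring
        have h2 : (m : ℝ) * x = ((m+1 : ℕ) : ℝ) * x - x := by push_cast; ring
        rw [h1, h2, Real.cos_add, Real.cos_sub]
        ring
      have h := hdx x
      push_cast at trig ⊢
      field_simp
      ring_nf at trig ⊢
      linear_combination trig
    rw [intervalIntegral.integral_congr (g := fun x =>
      2 * c * (Real.cos (((m+1 : ℕ) : ℝ) * x) / (c - Real.cos x))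
        - Real.cos ((m : ℝ) * x) / (c - Real.cos x)
        - 2 * Real.cos (((m+1 : ℕ) : ℝ) * x)) (fun x _ => key x)]
    have i1 : IntervalIntegrable (fun x => 2 * c * (Real.cos (((m+1 : ℕ) : ℝ) * x) / (c - Real.cos x)))
        MeasureTheory.volume (-π) π := (intg_cos_div c hc (m+1) _ _).const_mul _
    have i2 := intg_cos_div c hc m (-π) π
    have i3 : IntervalIntegrable (fun x => 2 * Real.cos (((m+1 : ℕ) : ℝ) * x))
        MeasureTheory.volume (-π) π := by
      apply Continuous.intervalIntegrable; continuity
    rw [intervalIntegral.integral_sub (i1.sub i2) i3,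
      intervalIntegral.integral_sub i1 i2,
      intervalIntegral.integral_const_mul, intervalIntegral.integral_const_mul,
      ih1, ih0, integral_cos_nat_mul (m+1) (by omega)]
    have hrr : (c - s) ^ 2 = 2 * c * (c - s) - 1 := by nlinarith
    have hsne : s ≠ 0 := hs0.ne'
    field_simp
    linear_combination (2 * π * (c - s) ^ m) * hrr - 3 * π * (c - s) ^ m * hs2

lemma den2_pos {k : ℝ} (hk : 0 < k) (x : ℝ) : 0 < k + Real.sin x ^ 2 := by positivity

lemma intg_g {k : ℝ} (hk : 0 < k) (n : ℕ) (a b : ℝ) :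
    IntervalIntegrable (fun x => Real.cos (n * x) / (k + Real.sin x ^ 2))
      MeasureTheory.volume a b := by
  apply Continuous.intervalIntegrable
  exact (Real.continuous_cos.comp (continuous_const.mul continuous_id)).div
    (continuous_const.add (Real.continuous_sin.pow 2)) (fun x => (den2_pos hk x).ne')

lemma even_case (k : ℝ) (hk : 0 < k) (m : ℕ) :
    ∫ x in (-π)..π, Real.cos ((2 * m : ℕ) * x) / (k + Real.sin x ^ 2)
      = 2 * ∫ u in (-π)..π, Real.cos (m * u) / (2 * k + 1 - Real.cos u) := by
  have hc : (1:ℝ) < 2 * k + 1 := by linarith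
  set g : ℝ → ℝ := fun u => 2 * (Real.cos (m * u) / (2 * k + 1 - Real.cos u)) with hg
  have hgi : ∀ a b : ℝ, IntervalIntegrable g MeasureTheory.volume a b :=
    fun a b => (intg_cos_div (2*k+1) hc m a b).const_mul 2
  have key : ∀ x : ℝ, Real.cos ((2 * m : ℕ) * x) / (k + Real.sin x ^ 2) = g (2 * x) := by
    intro x
    have h1 : ((2 * m : ℕ) : ℝ) * x = (m : ℝ) * (2 * x) := by push_cast; ring
    have h2 : k + Real.sin x ^ 2 = (2 * k + 1 - Real.cos (2 * x)) / 2 := by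
      have := Real.cos_two_mul x
      have := Real.sin_sq_add_cos_sq x
      linarith
    rw [h1, h2, hg]
    have hd := den_pos hc (2 * x)
    field_simp
  rw [intervalIntegral.integral_congr (g := fun x => g (2 * x)) (fun x _ => key x)]
  have hper : Function.Periodic g (2 * π) := by
    intro u
    simp only [hg]
    rw [mul_add, show (m : ℝ) * (2 * π) = (m : ℕ) * (2 * π) by norm_num,
      Real.cos_add_nat_mul_two_pi, Real.cos_add_two_pi]
  have hsub : (2:ℝ) • (∫ x in (-π)..π, g (2 * x)) = ∫ u in (2*(-π))..(2*π), g u :=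
    intervalIntegral.smul_integral_comp_mul_left g 2
  have hsplit : ∫ u in (2*(-π))..(2*π), g u = 2 * ∫ u in (-π)..π, g u := by
    rw [show (2:ℝ)*(-π) = -(2*π) by ring]
    rw [← intervalIntegral.integral_add_adjacent_intervals (b := 0)
      (hgi _ _) (hgi _ _)]
    have e1 : ∫ u in (-(2*π))..(0:ℝ), g u = ∫ u in (-π)..π, g u := by
      have := hper.intervalIntegral_add_eq (-(2*π)) (-π)
      simpa [show -(2*π) + 2*π = (0:ℝ) by ring, show -π + 2*π = π by ring] using this
    have e2 : ∫ u in (0:ℝ)..(2*π), g u = ∫ u in (-π)..π, g u := by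
      have := hper.intervalIntegral_add_eq 0 (-π)
      simpa [show -π + 2*π = π by ring] using this
    rw [e1, e2]; ring
  have hfin : (2:ℝ) • (∫ x in (-π)..π, g (2 * x)) = 2 * ∫ u in (-π)..π, g u := by
    rw [hsub, hsplit]
  have h2 : (∫ x in (-π)..π, g (2 * x)) = ∫ u in (-π)..π, g u := by
    have := hfin
    simp only [smul_eq_mul] at this
    linarith
  rw [h2, hg]
  rw [intervalIntegral.integral_const_mul]

lemma odd_case (k : ℝ) (hk : 0 < k) (n : ℕ) (hodd : Odd n) :
    ∫ x in (-π)..π, Real.cos (n * x) / (k + Real.sin x ^ 2) = 0 := by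
  set g : ℝ → ℝ := fun x => Real.cos (n * x) / (k + Real.sin x ^ 2) with hg
  have key : ∀ x : ℝ, g (x + π) = - g x := by
    intro x
    simp only [hg]
    have h1 : (n : ℝ) * (x + π) = n * x + n * π := by ring
    have hcn : Real.cos ((n:ℝ) * π) = (-1) ^ n := by
      simpa using Real.cos_nat_mul_pi_sub 0 n
    have hsn : Real.sin ((n:ℝ) * π) = 0 := Real.sin_nat_mul_pi n
    rw [h1, Real.cos_add, Real.sin_add_pi, hcn, hsn, hodd.neg_one_pow]
    ring_nf
  have h1 := intg_g hk n (-π) (0:ℝ)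
  have h2 := intg_g hk n (0:ℝ) π
  rw [← intervalIntegral.integral_add_adjacent_intervals (b := (0:ℝ)) h1 h2]
  have e0 : ∫ x in (-π)..(0:ℝ), g (x + π) = ∫ x in (0:ℝ)..π, g x := by
    have h := intervalIntegral.integral_comp_add_right (a := -π) (b := (0:ℝ)) g π
    simpa using h
  have e1 : ∫ x in (-π)..(0:ℝ), g (x + π) = - ∫ x in (-π)..(0:ℝ), g x := by
    rw [intervalIntegral.integral_congr (g := fun x => - g x) (fun x _ => key x)]
    exact intervalIntegral.integral_neg
  have : ∫ x in (0:ℝ)..π, g x = - ∫ x in (-π)..(0:ℝ), g x := by rw [← e0, e1]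
  rw [this]; ring

theorem stmt_11 (k : ℝ) (hk : 0 < k) (n : ℕ) (hn : 1 ≤ n) :
    ∫ x in (-π)..π, Real.cos (n * x) / (k + Real.sin x ^ 2)
      = ((-1 : ℝ) ^ n + 1) / 2 * π *
          (-(((2 * k + 1 + 2 * Real.sqrt (k * (k + 1))) ^ (n / 2)
                - (2 * k + 1 - 2 * Real.sqrt (k * (k + 1))) ^ (n / 2))
              / Real.sqrt (k * (k + 1)))
            + Real.cosh (2 * (n / 2 : ℕ) * Real.arsinh (Real.sqrt k))
                * 2 / Real.sqrt (k * (k + 1))) := by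
  rcases Nat.even_or_odd n with he | ho
  · -- even case
    obtain ⟨m, hm⟩ := he
    have hn2 : n = 2 * m := by omega
    subst hn2
    have hdiv : 2 * m / 2 = m := by omega
    rw [hdiv]
    have hc : (1:ℝ) < 2 * k + 1 := by linarith
    set s := Real.sqrt (k * (k + 1)) with hs_def
    have hs2 : s ^ 2 = k * (k + 1) := Real.sq_sqrt (by positivity)
    have hs0 : 0 < s := Real.sqrt_pos.2 (by positivity)
    have hsqrt : Real.sqrt ((2 * k + 1) ^ 2 - 1) = 2 * s := by
      rw [show (2 * k + 1) ^ 2 - 1 = 2 ^ 2 * (k * (k + 1)) by ring,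
        Real.sqrt_mul (by positivity), Real.sqrt_sq (by norm_num)]
    have hLHS := even_case k hk m
    rw [hLHS, integral_cos_mul_div (2 * k + 1) hc m, hsqrt]
    -- now the right-hand side
    set a := 2 * k + 1 + 2 * s with ha_def
    set b := 2 * k + 1 - 2 * s with hb_def
    have hab : a * b = 1 := by
      simp only [ha_def, hb_def]
      linear_combination (-4 : ℝ) * hs2
    have ha0 : 0 < a := by simp only [ha_def]; positivity
    have habm : a ^ m * b ^ m = 1 := by rw [← mul_pow, hab, one_pow]
    have hcosh : Real.cosh (2 * (m:ℝ) * Real.arsinh (Real.sqrt k))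
        = (a ^ m + b ^ m) / 2 := by
      have hexp : Real.exp (Real.arsinh (Real.sqrt k)) = Real.sqrt k + Real.sqrt (k + 1) := by
        rw [Real.exp_arsinh, Real.sq_sqrt hk.le, add_comm 1 k]
      have hsq : (Real.sqrt k + Real.sqrt (k + 1)) ^ 2 = a := by
        have h1 : Real.sqrt k * Real.sqrt (k + 1) = s := by
          rw [hs_def, ← Real.sqrt_mul hk.le]
        have h2 : Real.sqrt k ^ 2 = k := Real.sq_sqrt hk.le
        have h3 : Real.sqrt (k + 1) ^ 2 = k + 1 := Real.sq_sqrt (by linarith)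
        simp only [ha_def]
        linear_combination h2 + h3 + 2 * h1
      have he1 : Real.exp (2 * (m:ℝ) * Real.arsinh (Real.sqrt k)) = a ^ m := by
        rw [show 2 * (m:ℝ) * Real.arsinh (Real.sqrt k)
            = ((2 * m : ℕ) : ℝ) * Real.arsinh (Real.sqrt k) by push_cast; ring,
          Real.exp_nat_mul, hexp, pow_mul, hsq]
      have he2 : Real.exp (-(2 * (m:ℝ) * Real.arsinh (Real.sqrt k))) = b ^ m := by
        rw [Real.exp_neg, he1]
        field_simp
        linarith [habm]
      rw [Real.cosh_eq, he1, he2]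
    rw [hcosh]
    have hEv : ((-1 : ℝ)) ^ (2 * m) = 1 := by
      rw [pow_mul]; norm_num
    rw [hEv]
    field_simp
    ring
  · -- odd case
    rw [odd_case k hk n ho, ho.neg_one_pow]
    norm_num
end

section
/- The integral over [-π, π] of Log(sin x + cos x) with respect to x (Log denoting the principal complex logarithm, applied to sin x + cos x viewed as a complex number) equals π·(iπ − ln 2); equivalently, the zeroth Fourier coefficient of x ↦ Log(sin x + cos x) is i(π + i·ln 2)/2. -/
open Real MeasureTheory intervalIntegral Set

noncomputable section

-- integrability of -log on (0,1]
lemma intOn_neg_log : IntegrableOn (fun x : ℝ => -Real.log x) (Set.Ioc (0:ℝ) 1) := by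
  apply integrableOn_deriv_of_nonneg (g := fun x => x - x * Real.log x)
  · exact (continuous_id.sub Real.continuous_mul_log).continuousOn
  · intro x hx
    have := (Real.hasDerivAt_mul_log (ne_of_gt hx.1))
    have h2 : HasDerivAt (fun x : ℝ => x - x * Real.log x) (1 - (Real.log x + 1)) x :=
      (hasDerivAt_id x).sub this
    simpa using h2
  · intro x hx
    have := Real.log_nonpos hx.1.le hx.2.le
    linarith

lemma intOn_logsin01 : IntegrableOn (fun x : ℝ => Real.log (Real.sin x)) (Set.Ioc (0:ℝ) 1) := by
  have hmeas : AEStronglyMeasurable (fun x : ℝ => Real.log (Real.sin x))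
      (volume.restrict (Set.Ioc (0:ℝ) 1)) :=
    (Real.measurable_log.comp Real.measurable_sin).aestronglyMeasurable
  have hg : IntegrableOn (fun x : ℝ => -Real.log x + Real.log 2) (Set.Ioc (0:ℝ) 1) :=
    intOn_neg_log.add (integrableOn_const (by simp))
  refine hg.integrable.mono hmeas ?_
  rw [ae_restrict_iff' measurableSet_Ioc]
  filter_upwards with x hx
  have hx0 := hx.1
  have hx1 := hx.2
  have hs1 : Real.sin x ≤ 1 := Real.sin_le_one x
  have hs2 : x / 2 < Real.sin x := by
    have h := Real.sin_gt_sub_cube hx0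
    have h3 : x * ((1 - x) * (1 + x)) ≥ 0 :=
      mul_nonneg hx0.le (mul_nonneg (by linarith) (by linarith))
    nlinarith
  have hspos : 0 < Real.sin x := lt_trans (by linarith) hs2
  have hlog1 : Real.log (Real.sin x) ≤ 0 := Real.log_nonpos hspos.le hs1
  have hlog2 : Real.log (x / 2) ≤ Real.log (Real.sin x) :=
    Real.log_le_log (by linarith) hs2.le
  rw [Real.log_div (ne_of_gt hx0) two_ne_zero] at hlog2
  have hlx : Real.log x ≤ 0 := Real.log_nonpos hx0.le hx1
  rw [Real.norm_eq_abs, Real.norm_eq_abs, abs_of_nonpos hlog1]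
  have : 0 ≤ -Real.log x + Real.log 2 := by
    have := Real.log_nonneg (by norm_num : (1:ℝ) ≤ 2); linarith
  rw [abs_of_nonneg this]
  linarith

end

noncomputable section
lemma II_logsin_halfpi : IntervalIntegrable (fun x : ℝ => Real.log (Real.sin x)) volume 0 (π/2) := by
  rw [intervalIntegrable_iff_integrableOn_Ioc_of_le (by positivity)]
  have h2 : IntegrableOn (fun x : ℝ => Real.log (Real.sin x)) (Set.Ioc (1:ℝ) (π/2)) := by
    rcases le_or_gt (π/2) 1 with h | h
    · rw [Set.Ioc_eq_empty (by simpa using h)]; exact integrableOn_empty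
    · refine ((Real.continuous_sin.continuousOn.log ?_).integrableOn_compact
        isCompact_Icc).mono_set Set.Ioc_subset_Icc_self
      intro x hx
      have h1 : (0:ℝ) < x := lt_of_lt_of_le one_pos hx.1
      have h2 : x < π := lt_of_le_of_lt hx.2 (by linarith [Real.pi_pos])
      exact ne_of_gt (Real.sin_pos_of_pos_of_lt_pi h1 h2)
  rcases le_or_gt (π/2) 1 with h | h
  · exact intOn_logsin01.mono_set (Set.Ioc_subset_Ioc le_rfl h)
  · have := intOn_logsin01.union h2
    rwa [Set.Ioc_union_Ioc_eq_Ioc zero_le_one h.le] at this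

lemma II_logsin_pi2_pi : IntervalIntegrable (fun x : ℝ => Real.log (Real.sin x)) volume (π/2) π := by
  have h := II_logsin_halfpi.comp_sub_left π
  have he : (fun x : ℝ => Real.log (Real.sin (π - x))) = fun x : ℝ => Real.log (Real.sin x) := by
    funext x; rw [Real.sin_pi_sub]
  rw [he] at h
  simpa [sub_half] using h.symm

lemma II_logsin_pi : IntervalIntegrable (fun x : ℝ => Real.log (Real.sin x)) volume 0 π :=
  II_logsin_halfpi.trans II_logsin_pi2_pi

lemma ae_ne_point (c : ℝ) : ∀ᵐ x : ℝ, x ≠ c := by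
  have : volume ({c} : Set ℝ) = 0 := Real.volume_singleton
  filter_upwards [measure_eq_zero_iff_ae_notMem.1 this] with x hx
  simpa using hx

lemma integral_log_sin_pi : ∫ x in (0:ℝ)..π, Real.log (Real.sin x) = -π * Real.log 2 := by
  set I := ∫ x in (0:ℝ)..π, Real.log (Real.sin x) with hI
  set J := ∫ x in (0:ℝ)..(π/2), Real.log (Real.sin x) with hJ
  have hpi := Real.pi_pos
  -- second half equals J
  have hsecond : ∫ x in (π/2:ℝ)..π, Real.log (Real.sin x) = J := by
    have := intervalIntegral.integral_comp_sub_left (a := (π/2:ℝ)) (b := π)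
      (fun x => Real.log (Real.sin x)) π
    have he : (fun x : ℝ => Real.log (Real.sin (π - x))) = fun x : ℝ => Real.log (Real.sin x) := by
      funext x; rw [Real.sin_pi_sub]
    rw [he] at this
    rw [this, sub_self, sub_half]
  have hIJ : I = 2 * J := by
    rw [hI, ← intervalIntegral.integral_add_adjacent_intervals II_logsin_halfpi II_logsin_pi2_pi,
      hsecond, ← hJ]; ring
  -- cos integral equals J
  have hcosII : IntervalIntegrable (fun x : ℝ => Real.log (Real.cos x)) volume 0 (π/2) := by
    have h := II_logsin_halfpi.comp_sub_left (π/2)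
    have he : (fun x : ℝ => Real.log (Real.sin (π/2 - x))) = fun x : ℝ => Real.log (Real.cos x) := by
      funext x; rw [Real.sin_pi_div_two_sub]
    rw [he] at h
    simpa using h.symm
  have hcos : ∫ x in (0:ℝ)..(π/2), Real.log (Real.cos x) = J := by
    have := intervalIntegral.integral_comp_sub_left (a := (0:ℝ)) (b := π/2)
      (fun x => Real.log (Real.sin x)) (π/2)
    have he : (fun x : ℝ => Real.log (Real.sin (π/2 - x))) = fun x : ℝ => Real.log (Real.cos x) := by
      funext x; rw [Real.sin_pi_div_two_sub]
    rw [he] at this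
    rw [this, sub_self, sub_zero]
  -- doubling identity
  have hdouble : IntervalIntegrable (fun x : ℝ => Real.log (Real.sin (2 * x))) volume 0 (π/2) := by
    simpa using II_logsin_pi.comp_mul_left (c := 2)
  have key : J + J = I / 2 - (π/2) * Real.log 2 := by
    have h1 : J + J = ∫ x in (0:ℝ)..(π/2),
        (Real.log (Real.sin x) + Real.log (Real.cos x)) := by
      rw [intervalIntegral.integral_add II_logsin_halfpi hcosII, hcos]
    have h2 : ∫ x in (0:ℝ)..(π/2), (Real.log (Real.sin x) + Real.log (Real.cos x))
        = ∫ x in (0:ℝ)..(π/2), (Real.log (Real.sin (2*x)) - Real.log 2) := by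
      apply intervalIntegral.integral_congr_ae
      filter_upwards [ae_ne_point (π/2)] with x hne hx
      rw [Set.uIoc_of_le (by positivity)] at hx
      have hx0 : 0 < x := hx.1
      have hx2 : x < π/2 := lt_of_le_of_ne hx.2 hne
      have hs : 0 < Real.sin x := Real.sin_pos_of_pos_of_lt_pi hx0 (by linarith)
      have hc : 0 < Real.cos x := Real.cos_pos_of_mem_Ioo ⟨by linarith, hx2⟩
      rw [← Real.log_mul (ne_of_gt hs) (ne_of_gt hc)]
      rw [Real.sin_two_mul, ← Real.log_div (by positivity) two_ne_zero]
      congr 1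
      ring
    have h3 : ∫ x in (0:ℝ)..(π/2), (Real.log (Real.sin (2*x)) - Real.log 2)
        = (∫ x in (0:ℝ)..(π/2), Real.log (Real.sin (2*x))) - (π/2) * Real.log 2 := by
      rw [intervalIntegral.integral_sub hdouble intervalIntegrable_const,
        intervalIntegral.integral_const]
      norm_num
    have h4 : ∫ x in (0:ℝ)..(π/2), Real.log (Real.sin (2*x)) = I / 2 := by
      rw [intervalIntegral.integral_comp_mul_left (fun x => Real.log (Real.sin x))
        (two_ne_zero)]
      norm_num [hI]
      rw [show (2:ℝ) * (π/2) = π by ring]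
      ring
    rw [h1, h2, h3, h4]
  rw [hIJ] at key ⊢
  linarith
end

noncomputable section
open Function

lemma II_congr_Ioc {f g : ℝ → ℝ} {a b : ℝ} (hab : a ≤ b)
    (hg : IntervalIntegrable g volume a b)
    (h : ∀ᵐ x : ℝ, x ∈ Set.Ioc a b → f x = g x) :
    IntervalIntegrable f volume a b := by
  rw [intervalIntegrable_iff_integrableOn_Ioc_of_le hab] at hg ⊢
  exact hg.congr ((ae_restrict_iff' measurableSet_Ioc).2 (h.mono fun x hx hmem => (hx hmem).symm))

lemma logabs_sin_periodic : Periodic (fun x : ℝ => Real.log |Real.sin x|) π := by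
  intro x
  simp [Real.sin_add_pi]

lemma II_logabs_sin_0pi : IntervalIntegrable (fun x : ℝ => Real.log |Real.sin x|) volume 0 π := by
  refine II_congr_Ioc Real.pi_pos.le II_logsin_pi ?_
  filter_upwards with x hx
  rw [abs_of_nonneg (Real.sin_nonneg_of_nonneg_of_le_pi hx.1.le hx.2)]

lemma II_logabs_sin_big : IntervalIntegrable (fun x : ℝ => Real.log |Real.sin x|) volume (-π) (2*π) := by
  have h1 : IntervalIntegrable (fun x : ℝ => Real.log |Real.sin x|) volume (-π) 0 := by
    have := II_logabs_sin_0pi.comp_add_right π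
    have he : (fun x : ℝ => Real.log |Real.sin (x + π)|) = fun x : ℝ => Real.log |Real.sin x| := by
      funext x; simpa using (logabs_sin_periodic x)
    rw [he] at this
    simpa using this
  have h2 : IntervalIntegrable (fun x : ℝ => Real.log |Real.sin x|) volume π (2*π) := by
    have := II_logabs_sin_0pi.comp_sub_right π
    have he : (fun x : ℝ => Real.log |Real.sin (x - π)|) = fun x : ℝ => Real.log |Real.sin x| := by
      funext x
      have := logabs_sin_periodic (x - π)
      simpa using this.symm
    rw [he] at this
    simpa [two_mul] using this
  exact (h1.trans II_logabs_sin_0pi).trans h2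

lemma II_logabs_sin_sub {a b : ℝ} (ha : -π ≤ a) (hb : b ≤ 2*π) (hab : a ≤ b) :
    IntervalIntegrable (fun x : ℝ => Real.log |Real.sin x|) volume a b := by
  apply II_logabs_sin_big.mono_set
  rw [Set.uIcc_of_le hab, Set.uIcc_of_le (by linarith [Real.pi_pos])]
  exact Set.Icc_subset_Icc ha hb

lemma integral_logabs_sin_0pi : ∫ x in (0:ℝ)..π, Real.log |Real.sin x| = -π * Real.log 2 := by
  rw [← integral_log_sin_pi]
  apply intervalIntegral.integral_congr
  intro x hx
  rw [Set.uIcc_of_le Real.pi_pos.le] at hx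
  show Real.log |Real.sin x| = Real.log (Real.sin x)
  rw [abs_of_nonneg (Real.sin_nonneg_of_nonneg_of_le_pi hx.1 hx.2)]

lemma integral_logabs_sin_shift :
    ∫ x in (-(3*π/4))..(5*π/4), Real.log |Real.sin x| = -(2*π) * Real.log 2 := by
  have hpi := Real.pi_pos
  have e1 : ∫ x in (-(3*π/4))..(π/4), Real.log |Real.sin x| = -π * Real.log 2 := by
    have := logabs_sin_periodic.intervalIntegral_add_eq (-(3*π/4)) 0
    rw [show -(3*π/4) + π = π/4 by ring, zero_add] at this
    rw [this, integral_logabs_sin_0pi]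
  have e2 : ∫ x in (π/4)..(5*π/4), Real.log |Real.sin x| = -π * Real.log 2 := by
    have := logabs_sin_periodic.intervalIntegral_add_eq (π/4) 0
    rw [show π/4 + π = 5*π/4 by ring, zero_add] at this
    rw [this, integral_logabs_sin_0pi]
  have i1 : IntervalIntegrable (fun x : ℝ => Real.log |Real.sin x|) volume (-(3*π/4)) (π/4) :=
    II_logabs_sin_sub (by linarith) (by linarith) (by linarith)
  have i2 : IntervalIntegrable (fun x : ℝ => Real.log |Real.sin x|) volume (π/4) (5*π/4) :=
    II_logabs_sin_sub (by linarith) (by linarith) (by linarith)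
  rw [← intervalIntegral.integral_add_adjacent_intervals i1 i2, e1, e2]
  ring
end

noncomputable section

lemma clog_of_neg {r : ℝ} (hr : r < 0) :
    Complex.log (r : ℂ) = (Real.log |r| : ℂ) + (π : ℂ) * Complex.I := by
  rw [Complex.log, Complex.norm_real, Real.norm_eq_abs, Complex.arg_ofReal_of_neg hr]

lemma clog_of_nonneg {r : ℝ} (hr : 0 ≤ r) :
    Complex.log (r : ℂ) = (Real.log |r| : ℂ) := by
  rw [abs_of_nonneg hr, Complex.ofReal_log hr]

lemma gid (x : ℝ) : Real.sin x + Real.cos x = Real.sqrt 2 * Real.sin (x + π/4) := by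
  rw [Real.sin_add, Real.cos_pi_div_four, Real.sin_pi_div_four]
  have h2 : Real.sqrt 2 * Real.sqrt 2 = 2 := Real.mul_self_sqrt (by norm_num)
  nlinarith [Real.sin_le_one x, Real.cos_le_one x]

lemma absgid (x : ℝ) : |Real.sin x + Real.cos x| = Real.sqrt 2 * |Real.sin (x + π/4)| := by
  rw [gid x, abs_mul, abs_of_nonneg (Real.sqrt_nonneg 2)]

lemma hZ : volume {x : ℝ | Real.sin (x + π/4) = 0} = 0 := by
  refine measure_mono_null ?_
    ((Set.countable_range (fun k : ℤ => (k : ℝ) * π - π/4)).measure_zero _)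
  intro x hx
  rcases Real.sin_eq_zero_iff.1 hx with ⟨n, hn⟩
  exact ⟨n, by linarith⟩

lemma h_ae : ∀ᵐ x : ℝ, Real.log |Real.sin x + Real.cos x|
    = Real.log (Real.sqrt 2) + Real.log |Real.sin (x + π/4)| := by
  filter_upwards [measure_eq_zero_iff_ae_notMem.1 hZ] with x hx
  have hs : Real.sin (x + π/4) ≠ 0 := by simpa using hx
  rw [absgid x, Real.log_mul (by positivity) (by simpa using hs)]

lemma II_h {a b : ℝ} (ha : -π ≤ a) (hb : b ≤ π) (hab : a ≤ b) :
    IntervalIntegrable (fun x => Real.log |Real.sin x + Real.cos x|) volume a b := by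
  have hpi := Real.pi_pos
  have base : IntervalIntegrable (fun x : ℝ => Real.log |Real.sin x|) volume (a + π/4) (b + π/4) :=
    II_logabs_sin_sub (by linarith) (by linarith) (by linarith)
  have shifted := base.comp_add_right (π/4)
  simp only [add_sub_cancel_right] at shifted
  have sum := (intervalIntegrable_const (μ := volume)
    (a := a) (b := b) (c := Real.log (Real.sqrt 2))).add shifted
  refine II_congr_Ioc hab sum ?_
  filter_upwards [h_ae] with x hx _
  exact hx

lemma Aval : ∫ x in (-π)..π, Real.log |Real.sin x + Real.cos x| = -π * Real.log 2 := by
  have hpi := Real.pi_pos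
  have base : IntervalIntegrable (fun x : ℝ => Real.log |Real.sin x|) volume (-π + π/4) (π + π/4) :=
    II_logabs_sin_sub (by linarith) (by linarith) (by linarith)
  have shifted := base.comp_add_right (π/4)
  simp only [add_sub_cancel_right] at shifted
  have step1 : ∫ x in (-π)..π, Real.log |Real.sin x + Real.cos x|
      = ∫ x in (-π)..π, (Real.log (Real.sqrt 2) + Real.log |Real.sin (x + π/4)|) := by
    apply intervalIntegral.integral_congr_ae
    filter_upwards [h_ae] with x hx _
    exact hx
  rw [step1, intervalIntegral.integral_add intervalIntegrable_const shifted,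
    intervalIntegral.integral_const]
  have step2 : ∫ x in (-π)..π, Real.log |Real.sin (x + π/4)|
      = ∫ x in (-(3*π/4))..(5*π/4), Real.log |Real.sin x| := by
    rw [intervalIntegral.integral_comp_add_right (fun x => Real.log |Real.sin x|) (π/4)]
    norm_num
    ring_nf
  rw [step2, integral_logabs_sin_shift, Real.log_sqrt (by norm_num)]
  rw [smul_eq_mul]
  ring
end

noncomputable section

lemma II_ofReal {f : ℝ → ℝ} {a b : ℝ} (h : IntervalIntegrable f volume a b) :
    IntervalIntegrable (fun x => (f x : ℂ)) volume a b :=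
  ⟨h.1.ofReal, h.2.ofReal⟩

lemma II_congr_IocC {f g : ℝ → ℂ} {a b : ℝ} (hab : a ≤ b)
    (hg : IntervalIntegrable g volume a b)
    (h : ∀ᵐ x : ℝ, x ∈ Set.Ioc a b → f x = g x) :
    IntervalIntegrable f volume a b := by
  rw [intervalIntegrable_iff_integrableOn_Ioc_of_le hab] at hg ⊢
  exact hg.congr ((ae_restrict_iff' measurableSet_Ioc).2 (h.mono fun x hx hmem => (hx hmem).symm))

lemma sgn1 {x : ℝ} (hx : x ∈ Set.Ioo (-π) (-(π/4))) : Real.sin x + Real.cos x < 0 := by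
  have hpi := Real.pi_pos
  rw [gid x]
  have hs : Real.sin (x + π/4) < 0 := by
    apply Real.sin_neg_of_neg_of_neg_pi_lt (by linarith [hx.2]) (by linarith [hx.1])
  have := Real.sqrt_pos.2 (show (0:ℝ) < 2 by norm_num)
  nlinarith

lemma sgn2 {x : ℝ} (hx : x ∈ Set.Icc (-(π/4)) (3*π/4)) : 0 ≤ Real.sin x + Real.cos x := by
  rw [gid x]
  have hs : 0 ≤ Real.sin (x + π/4) :=
    Real.sin_nonneg_of_nonneg_of_le_pi (by linarith [hx.1]) (by linarith [hx.2])
  positivity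

lemma sgn3 {x : ℝ} (hx : x ∈ Set.Ioc (3*π/4) π) : Real.sin x + Real.cos x < 0 := by
  have hpi := Real.pi_pos
  rw [gid x]
  have h1 : Real.sin ((x + π/4) - π) > 0 :=
    Real.sin_pos_of_pos_of_lt_pi (by linarith [hx.1]) (by linarith [hx.2])
  rw [Real.sin_sub_pi] at h1
  have := Real.sqrt_pos.2 (show (0:ℝ) < 2 by norm_num)
  nlinarith

theorem stmt_14 :
    ∫ x in (-π)..π, Complex.log ((Real.sin x + Real.cos x : ℝ) : ℂ)
      = (π : ℂ) * (Complex.I * (π : ℂ) - (Real.log 2 : ℂ)) := by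
  have hpi := Real.pi_pos
  set F : ℝ → ℂ := fun x => Complex.log ((Real.sin x + Real.cos x : ℝ) : ℂ) with hF
  set N : ℝ → ℂ := fun x => ((Real.log |Real.sin x + Real.cos x| : ℝ) : ℂ) with hN
  -- real integrabilities
  have ih1 := II_h (a := -π) (b := -(π/4)) le_rfl (by linarith) (by linarith)
  have ih2 := II_h (a := -(π/4)) (b := 3*π/4) (by linarith) (by linarith) (by linarith)
  have ih3 := II_h (a := 3*π/4) (b := π) (by linarith) (by linarith) (by linarith)
  have iN1 := II_ofReal ih1
  have iN2 := II_ofReal ih2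
  have iN3 := II_ofReal ih3
  -- pointwise / ae identities on the three pieces
  have ae1 : ∀ᵐ x : ℝ, x ∈ Set.Ioc (-π) (-(π/4)) → F x = N x + (π:ℂ) * Complex.I := by
    filter_upwards [ae_ne_point (-(π/4))] with x hne hx
    have hlt : Real.sin x + Real.cos x < 0 := sgn1 ⟨hx.1, lt_of_le_of_ne hx.2 hne⟩
    simp only [hF, hN, clog_of_neg hlt]
  have ae2 : ∀ᵐ x : ℝ, x ∈ Set.Ioc (-(π/4)) (3*π/4) → F x = N x := by
    filter_upwards with x hx
    have hge : 0 ≤ Real.sin x + Real.cos x := sgn2 ⟨hx.1.le, hx.2⟩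
    simp only [hF, hN, clog_of_nonneg hge]
  have ae3 : ∀ᵐ x : ℝ, x ∈ Set.Ioc (3*π/4) π → F x = N x + (π:ℂ) * Complex.I := by
    filter_upwards with x hx
    have hlt : Real.sin x + Real.cos x < 0 := sgn3 hx
    simp only [hF, hN, clog_of_neg hlt]
  -- complex integrabilities
  have c1 : IntervalIntegrable F volume (-π) (-(π/4)) :=
    II_congr_IocC (by linarith) (iN1.add (intervalIntegrable_const
      (μ := volume) (a := -π) (b := -(π/4)) (c := (π:ℂ) * Complex.I))) ae1
  have c2 : IntervalIntegrable F volume (-(π/4)) (3*π/4) :=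
    II_congr_IocC (by linarith) iN2 ae2
  have c3 : IntervalIntegrable F volume (3*π/4) π :=
    II_congr_IocC (by linarith) (iN3.add (intervalIntegrable_const
      (μ := volume) (a := 3*π/4) (b := π) (c := (π:ℂ) * Complex.I))) ae3
  -- split
  have split : ∫ x in (-π)..π, F x
      = (∫ x in (-π)..(-(π/4)), F x) + (∫ x in (-(π/4))..(3*π/4), F x)
        + (∫ x in (3*π/4)..π, F x) := by
    rw [← intervalIntegral.integral_add_adjacent_intervals (c1.trans c2) c3,
      ← intervalIntegral.integral_add_adjacent_intervals c1 c2]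
  -- piece values
  have P1 : ∫ x in (-π)..(-(π/4)), F x
      = (∫ x in (-π)..(-(π/4)), N x) + ((3*π/4 : ℝ) : ℂ) * ((π:ℂ) * Complex.I) := by
    rw [intervalIntegral.integral_congr_ae (by
      rw [Set.uIoc_of_le (by linarith : (-π:ℝ) ≤ -(π/4))]
      exact ae1)]
    rw [intervalIntegral.integral_add iN1 (intervalIntegrable_const
      (μ := volume) (a := -π) (b := -(π/4)) (c := (π:ℂ) * Complex.I)),
      intervalIntegral.integral_const]
    congr 1
    rw [show (-(π/4) - (-π)) = (3*π/4 : ℝ) by ring, Complex.real_smul]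
  have P2 : ∫ x in (-(π/4))..(3*π/4), F x = ∫ x in (-(π/4))..(3*π/4), N x := by
    apply intervalIntegral.integral_congr_ae
    rw [Set.uIoc_of_le (by linarith : (-(π/4):ℝ) ≤ 3*π/4)]
    exact ae2
  have P3 : ∫ x in (3*π/4)..π, F x
      = (∫ x in (3*π/4)..π, N x) + ((π/4 : ℝ) : ℂ) * ((π:ℂ) * Complex.I) := by
    rw [intervalIntegral.integral_congr_ae (by
      rw [Set.uIoc_of_le (by linarith : (3*π/4:ℝ) ≤ π)]
      exact ae3)]
    rw [intervalIntegral.integral_add iN3 (intervalIntegrable_const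
      (μ := volume) (a := 3*π/4) (b := π) (c := (π:ℂ) * Complex.I)),
      intervalIntegral.integral_const]
    congr 1
    rw [show (π - 3*π/4) = (π/4 : ℝ) by ring, Complex.real_smul]
  -- recombine N-integrals
  have recomb : (∫ x in (-π)..(-(π/4)), N x) + (∫ x in (-(π/4))..(3*π/4), N x)
      + (∫ x in (3*π/4)..π, N x) = ∫ x in (-π)..π, N x := by
    rw [intervalIntegral.integral_add_adjacent_intervals iN1 iN2,
      intervalIntegral.integral_add_adjacent_intervals (iN1.trans iN2) iN3]
  have NA : ∫ x in (-π)..π, N x = ((-π * Real.log 2 : ℝ) : ℂ) := by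
    rw [hN, intervalIntegral.integral_ofReal, Aval]
  calc ∫ x in (-π)..π, F x
      = ((∫ x in (-π)..(-(π/4)), N x) + (∫ x in (-(π/4))..(3*π/4), N x)
          + (∫ x in (3*π/4)..π, N x))
        + (((3*π/4 : ℝ) : ℂ) * ((π:ℂ) * Complex.I)
          + ((π/4 : ℝ) : ℂ) * ((π:ℂ) * Complex.I)) := by
        rw [split, P1, P2, P3]; ring
    _ = ((-π * Real.log 2 : ℝ) : ℂ)
        + (((3*π/4 : ℝ) : ℂ) * ((π:ℂ) * Complex.I)
          + ((π/4 : ℝ) : ℂ) * ((π:ℂ) * Complex.I)) := by rw [recomb, NA]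
    _ = (π : ℂ) * (Complex.I * (π : ℂ) - (Real.log 2 : ℂ)) := by push_cast; ring
end
end
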